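/- Let H be a Hilbert space and suppose e₁, …, e_n are zero-mean H-valued random elements, each expressed as eᵢ = ∑_k √λ_k e_{i,k} ψ_k with ∑_k λ_k < ∞, with the cross-moment structure E(e_{i₁,k₁} e_{i₂,k₂}) = δ_{i₁}^{i₂} δ_{k₁}^{k₂}. Let m ∈ ℝⁿ and let D : Hⁿ → H be a bounded linear operator such that D applied to any vector of the form (m₁ h, …, m_n h), h ∈ H, is zero. Then D(e₁, …, e_n) and ∑ᵢ mᵢ eᵢ are orthogonal in L²(Ω; H): E⟨D(e₁,…,e_n), ∑ᵢ mᵢ eᵢ⟩_H = 0. -/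

import Mathlib

open RealInnerProductSpace MeasureTheory Filter
open scoped ENNReal

/-- coeFn of a finite sum in `Lp` is a.e. the sum of coeFns. -/
theorem GMaux.lp_coeFn_sum {α E : Type*} [MeasurableSpace α] {μ : Measure α}
    [NormedAddCommGroup E] {p : ℝ≥0∞}
    {ι : Type*} (s : Finset ι) (f : ι → Lp E p μ) :
    ⇑(∑ i ∈ s, f i) =ᵐ[μ] fun ω => ∑ i ∈ s, f i ω := by
  classical
  induction s using Finset.induction_on with
  | empty => simp only [Finset.sum_empty]; exact Lp.coeFn_zero E p μ
  | insert _ _ h ih =>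
    rename_i a s
    simp only [Finset.sum_insert h]
    filter_upwards [Lp.coeFn_add (f a) (∑ i ∈ s, f i), ih] with ω h1 h2
    rw [h1, Pi.add_apply, h2]

theorem GMaux.integrable_mul {Ω : Type*} [MeasurableSpace Ω] {μ : Measure Ω} {f g : Ω → ℝ}
    (hf : MemLp f 2 μ) (hg : MemLp g 2 μ) : Integrable (fun ω => f ω * g ω) μ :=
  memLp_one_iff_integrable.mp
    (hg.smul (φ := f) hf (r := 1) (hpqr := ⟨by norm_num [ENNReal.inv_two_add_inv_two]⟩))

/-- core orthogonality in the proof of the functional Gauss–Markov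
theorem.  Let `H` be a Hilbert space and `e₁, …, e_n` zero-mean `H`-valued random
elements expressed as `eᵢ = ∑_k √λ_k e_{i,k} ψ_k` (convergence of the partial sums in
`L²(Ω; H)`), with `∑_k λ_k < ∞`, `∑_k λ_k ‖ψ_k‖² < ∞` and cross-moment structure
`E(e_{i₁,k₁} e_{i₂,k₂}) = δ_{i₁}^{i₂} δ_{k₁}^{k₂}`.  Let `m ∈ ℝⁿ` and `D : Hⁿ → H` a
bounded linear operator vanishing on every vector of the form `(m₁h, …, m_nh)`.
Then `D(e₁,…,e_n)` and `∑ᵢ mᵢ eᵢ` are orthogonal in `L²(Ω; H)`: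
`E⟨D(e₁,…,e_n), ∑ᵢ mᵢ eᵢ⟩_H = 0`. -/
theorem gauss_markov_orthogonality
    {H : Type*} [NormedAddCommGroup H] [InnerProductSpace ℝ H] [CompleteSpace H]
    {Ω : Type*} [MeasurableSpace Ω] (μ : Measure Ω) [IsProbabilityMeasure μ]
    (n : ℕ)
    (lam : ℕ → ℝ) (hpos : ∀ k, 0 < lam k) (hsum : Summable lam)
    (ψ : ℕ → H) (hψsum : Summable fun k => lam k * ‖ψ k‖ ^ 2)
    (ek : Fin n → ℕ → Ω → ℝ)
    (hekmem : ∀ i k, MemLp (ek i k) 2 μ)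
    (hcross : ∀ i₁ i₂ : Fin n, ∀ k₁ k₂ : ℕ,
      (∫ ω, ek i₁ k₁ ω * ek i₂ k₂ ω ∂μ) = if i₁ = i₂ ∧ k₁ = k₂ then 1 else 0)
    (e : Fin n → Ω → H)
    (hemem : ∀ i, MemLp (e i) 2 μ)
    (hmean : ∀ i, ∫ ω, e i ω ∂μ = 0)
    (heL2 : ∀ i, Tendsto (fun N => ∫ ω,
        ‖e i ω - ∑ k ∈ Finset.range N, (Real.sqrt (lam k) * ek i k ω) • ψ k‖ ^ 2 ∂μ)
      atTop (nhds 0))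
    (m : Fin n → ℝ)
    (Dop : (Fin n → H) →L[ℝ] H)
    (hD : ∀ h : H, Dop (fun i => m i • h) = 0) :
    (∫ ω, ⟪Dop (fun i => e i ω), ∑ i, m i • e i ω⟫ ∂μ) = 0 := by
  classical
  -- component operators
  set T : Fin n → H →L[ℝ] H := fun i =>
    Dop.comp (ContinuousLinearMap.pi fun j =>
      if j = i then ContinuousLinearMap.id ℝ H else 0) with hT
  have hTapply : ∀ (i : Fin n) (h : H), T i h = Dop (Pi.single i h) := by
    intro i h
    simp only [hT, ContinuousLinearMap.comp_apply, ContinuousLinearMap.pi_apply]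
    congr 1
    funext j
    by_cases hj : j = i
    · subst hj; simp
    · simp [hj, Pi.single_apply]
  have hDdecomp : ∀ x : Fin n → H, Dop x = ∑ i, T i (x i) := by
    intro x
    conv_lhs => rw [← Finset.univ_sum_single x]
    rw [map_sum]
    exact Finset.sum_congr rfl fun i _ => (hTapply i (x i)).symm
  have hTm : ∀ h : H, (∑ i, m i • T i h) = 0 := by
    intro h
    have h1 : Dop (fun i => m i • h) = ∑ i, T i (m i • h) := hDdecomp _
    have h2 : ∀ i : Fin n, T i (m i • h) = m i • T i h := fun i => map_smul _ _ _
    simp only [h2] at h1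
    rw [← h1, hD]
  -- partial sums
  set S : ℕ → Fin n → Ω → H := fun N i ω =>
    ∑ k ∈ Finset.range N, (Real.sqrt (lam k) * ek i k ω) • ψ k with hS
  have hSmem : ∀ N i, MemLp (S N i) 2 μ := by
    intro N i
    exact memLp_finset_sum (Finset.range N) fun k _ =>
      (memLp_top_const (ψ k)).smul ((hekmem i k).const_mul _)
  -- coefficients
  set C : Fin n → ℕ → Fin n → ℕ → ℝ := fun i k j l =>
    ((Real.sqrt (lam k) * (m j * Real.sqrt (lam l))) * ⟪T i (ψ k), ψ l⟫) with hC
  -- pointwise expansion of the inner product of partial sums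
  have hpt : ∀ (N : ℕ) (ω : Ω),
      ⟪∑ i, T i (S N i ω), ∑ j, m j • S N j ω⟫ =
        ∑ i, ∑ j, ∑ k ∈ Finset.range N, ∑ l ∈ Finset.range N,
          C i k j l * (ek i k ω * ek j l ω) := by
    intro N ω
    have hTS : ∀ i, T i (S N i ω) =
        ∑ k ∈ Finset.range N, (Real.sqrt (lam k) * ek i k ω) • T i (ψ k) := by
      intro i
      rw [hS, map_sum]
      exact Finset.sum_congr rfl fun k _ => (T i).map_smul _ _
    have hmS : ∀ j, m j • S N j ω =
        ∑ l ∈ Finset.range N, (m j * (Real.sqrt (lam l) * ek j l ω)) • ψ l := by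
      intro j
      rw [hS, Finset.smul_sum]
      exact Finset.sum_congr rfl fun l _ => (smul_smul _ _ _)
    rw [sum_inner]
    refine Finset.sum_congr rfl fun i _ => ?_
    rw [inner_sum]
    refine Finset.sum_congr rfl fun j _ => ?_
    rw [hTS i, hmS j, sum_inner]
    refine Finset.sum_congr rfl fun k _ => ?_
    rw [inner_sum]
    refine Finset.sum_congr rfl fun l _ => ?_
    rw [real_inner_smul_left, real_inner_smul_right, hC]
    ring
  -- step A: for each N the integral of the partial-sum inner product vanishes
  have stepA : ∀ N, (∫ ω, ⟪∑ i, T i (S N i ω), ∑ j, m j • S N j ω⟫ ∂μ) = 0 := by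
    intro N
    have hint : ∀ (i j : Fin n) (k l : ℕ),
        Integrable (fun ω => C i k j l * (ek i k ω * ek j l ω)) μ := fun i j k l =>
      (GMaux.integrable_mul (hekmem i k) (hekmem j l)).const_mul _
    calc (∫ ω, ⟪∑ i, T i (S N i ω), ∑ j, m j • S N j ω⟫ ∂μ)
        = ∫ ω, ∑ i, ∑ j, ∑ k ∈ Finset.range N, ∑ l ∈ Finset.range N,
            C i k j l * (ek i k ω * ek j l ω) ∂μ :=
          integral_congr_ae (Filter.Eventually.of_forall fun ω => hpt N ω)
      _ = ∑ i, ∑ j, ∑ k ∈ Finset.range N, ∑ l ∈ Finset.range N,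
            ∫ ω, C i k j l * (ek i k ω * ek j l ω) ∂μ := by
          rw [integral_finset_sum _ fun i _ => integrable_finset_sum _ fun j _ =>
            integrable_finset_sum _ fun k _ => integrable_finset_sum _ fun l _ => hint i j k l]
          refine Finset.sum_congr rfl fun i _ => ?_
          rw [integral_finset_sum _ fun j _ =>
            integrable_finset_sum _ fun k _ => integrable_finset_sum _ fun l _ => hint i j k l]
          refine Finset.sum_congr rfl fun j _ => ?_
          rw [integral_finset_sum _ fun k _ => integrable_finset_sum _ fun l _ => hint i j k l]
          refine Finset.sum_congr rfl fun k _ => ?_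
          rw [integral_finset_sum _ fun l _ => hint i j k l]
      _ = ∑ i, ∑ j, ∑ k ∈ Finset.range N, ∑ l ∈ Finset.range N,
            C i k j l * (if i = j ∧ k = l then 1 else 0) := by
          refine Finset.sum_congr rfl fun i _ => Finset.sum_congr rfl fun j _ =>
            Finset.sum_congr rfl fun k _ => Finset.sum_congr rfl fun l _ => ?_
          rw [integral_const_mul, hcross]
      _ = ∑ i, ∑ j, if i = j then ∑ k ∈ Finset.range N, C i k j k else 0 := by
          refine Finset.sum_congr rfl fun i _ => Finset.sum_congr rfl fun j _ => ?_
          by_cases hij : i = j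
          · subst hij
            simp only [if_pos rfl, true_and]
            refine Finset.sum_congr rfl fun k hk => ?_
            simp only [mul_ite, mul_one, mul_zero]
            rw [Finset.sum_ite_eq (Finset.range N) k (fun l => C i k i l), if_pos hk]
          · simp [hij]
      _ = ∑ i, ∑ k ∈ Finset.range N, C i k i k := by
          refine Finset.sum_congr rfl fun i _ => ?_
          rw [Finset.sum_ite_eq Finset.univ i (fun j => ∑ k ∈ Finset.range N, C i k j k),
            if_pos (Finset.mem_univ i)]
      _ = 0 := by
          refine Finset.sum_comm.trans ?_
          refine Finset.sum_eq_zero fun k _ => ?_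
          have hCd : ∀ i : Fin n, C i k i k = lam k * (m i * ⟪T i (ψ k), ψ k⟫) := by
            intro i
            rw [hC]
            simp only
            rw [show Real.sqrt (lam k) * (m i * Real.sqrt (lam k)) =
              (Real.sqrt (lam k) * Real.sqrt (lam k)) * m i by ring,
              Real.mul_self_sqrt (hpos k).le]
            ring
          simp only [hCd, ← Finset.mul_sum]
          have : (∑ i, m i * ⟪T i (ψ k), ψ k⟫) = ⟪∑ i, m i • T i (ψ k), ψ k⟫ := by
            rw [sum_inner]
            exact Finset.sum_congr rfl fun i _ => (real_inner_smul_left _ _ _).symm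
          rw [this, hTm, inner_zero_left, mul_zero]
  -- Lp elements
  set E : Fin n → Lp H 2 μ := fun i => (hemem i).toLp (e i) with hE
  set G : ℕ → Fin n → Lp H 2 μ := fun N i => (hSmem N i).toLp (S N i) with hG
  have hGE : ∀ i, Tendsto (fun N => G N i) atTop (nhds (E i)) := by
    intro i
    rw [tendsto_iff_norm_sub_tendsto_zero]
    have key : ∀ N, ‖G N i - E i‖ = Real.sqrt (∫ ω, ‖e i ω - S N i ω‖ ^ 2 ∂μ) := by
      intro N
      have h1 : ‖G N i - E i‖ ^ 2 = ∫ ω, ‖e i ω - S N i ω‖ ^ 2 ∂μ := by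
        rw [← real_inner_self_eq_norm_sq, L2.inner_def]
        refine integral_congr_ae ?_
        filter_upwards [Lp.coeFn_sub (G N i) (E i), (hemem i).coeFn_toLp,
          (hSmem N i).coeFn_toLp] with ω h1 h2 h3
        rw [h1, Pi.sub_apply, hG, hE, h2, h3, real_inner_self_eq_norm_sq, norm_sub_rev]
      rw [← h1, Real.sqrt_sq (norm_nonneg _)]
    simp only [key]
    have := (Real.continuous_sqrt.tendsto 0).comp (heL2 i)
    simpa [Real.sqrt_zero, Function.comp_def] using this
  -- Lp versions
  set A : Lp H 2 μ := ∑ i, (T i).compLpL 2 μ (E i) with hA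
  set AN : ℕ → Lp H 2 μ := fun N => ∑ i, (T i).compLpL 2 μ (G N i) with hAN
  set B : Lp H 2 μ := ∑ i, m i • E i with hB
  set BN : ℕ → Lp H 2 μ := fun N => ∑ i, m i • G N i with hBN
  have hAconv : Tendsto AN atTop (nhds A) := by
    rw [hA, hAN]
    exact tendsto_finset_sum _ fun i _ =>
      (((T i).compLpL 2 μ).continuous.tendsto _).comp (hGE i)
  have hBconv : Tendsto BN atTop (nhds B) := by
    rw [hB, hBN]
    exact tendsto_finset_sum _ fun i _ => (hGE i).const_smul _
  have hinner : Tendsto (fun N => (⟪AN N, BN N⟫ : ℝ)) atTop (nhds ⟪A, B⟫) :=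
    hAconv.inner hBconv
  have hANBN : ∀ N, (⟪AN N, BN N⟫ : ℝ) = 0 := by
    intro N
    rw [L2.inner_def, ← stepA N]
    refine integral_congr_ae ?_
    have hAco : ⇑(AN N) =ᵐ[μ] fun ω => ∑ i, T i (S N i ω) := by
      have h1 := GMaux.lp_coeFn_sum (Finset.univ) (fun i => (T i).compLpL 2 μ (G N i))
      refine h1.trans ?_
      have h2 : ∀ i : Fin n, ((T i).compLpL 2 μ (G N i) : Ω → H) =ᵐ[μ]
          fun ω => T i (S N i ω) := by
        intro i
        refine (ContinuousLinearMap.coeFn_compLpL (T i) (G N i)).trans ?_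
        filter_upwards [(hSmem N i).coeFn_toLp] with ω hω
        rw [hω]
      have h3 := eventually_all_finset (Finset.univ (α := Fin n)) |>.mpr fun i _ => h2 i
      filter_upwards [h3] with ω hω
      exact Finset.sum_congr rfl fun i hi => hω i hi
    have hBco : ⇑(BN N) =ᵐ[μ] fun ω => ∑ i, m i • S N i ω := by
      have h1 := GMaux.lp_coeFn_sum (Finset.univ) (fun i => m i • G N i)
      refine h1.trans ?_
      have h2 : ∀ i : Fin n, ((m i • G N i : Lp H 2 μ) : Ω → H) =ᵐ[μ]
          fun ω => m i • S N i ω := by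
        intro i
        refine (Lp.coeFn_smul (m i) (G N i)).trans ?_
        filter_upwards [(hSmem N i).coeFn_toLp] with ω hω
        simp [hG, hω]
      have h3 := eventually_all_finset (Finset.univ (α := Fin n)) |>.mpr fun i _ => h2 i
      filter_upwards [h3] with ω hω
      exact Finset.sum_congr rfl fun i hi => hω i hi
    filter_upwards [hAco, hBco] with ω h1 h2
    rw [h1, h2]
  have hABzero : (⟪A, B⟫ : ℝ) = 0 := by
    have : Tendsto (fun _ : ℕ => (0 : ℝ)) atTop (nhds ⟪A, B⟫) := by
      simpa [hANBN] using hinner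
    exact tendsto_nhds_unique this tendsto_const_nhds
  -- conclude
  rw [← hABzero, L2.inner_def]
  refine integral_congr_ae ?_
  have hAco : ⇑A =ᵐ[μ] fun ω => Dop (fun i => e i ω) := by
    have h1 := GMaux.lp_coeFn_sum (Finset.univ) (fun i => (T i).compLpL 2 μ (E i))
    rw [hA]
    refine h1.trans ?_
    have h2 : ∀ i : Fin n, ((T i).compLpL 2 μ (E i) : Ω → H) =ᵐ[μ]
        fun ω => T i (e i ω) := by
      intro i
      refine (ContinuousLinearMap.coeFn_compLpL (T i) (E i)).trans ?_
      filter_upwards [(hemem i).coeFn_toLp] with ω hω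
      rw [hω]
    have h3 := eventually_all_finset (Finset.univ (α := Fin n)) |>.mpr fun i _ => h2 i
    filter_upwards [h3] with ω hω
    rw [hDdecomp]
    exact Finset.sum_congr rfl fun i hi => hω i hi
  have hBco : ⇑B =ᵐ[μ] fun ω => ∑ i, m i • e i ω := by
    have h1 := GMaux.lp_coeFn_sum (Finset.univ) (fun i => m i • E i)
    rw [hB]
    refine h1.trans ?_
    have h2 : ∀ i : Fin n, ((m i • E i : Lp H 2 μ) : Ω → H) =ᵐ[μ]
        fun ω => m i • e i ω := by
      intro i
      refine (Lp.coeFn_smul (m i) (E i)).trans ?_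
      filter_upwards [(hemem i).coeFn_toLp] with ω hω
      simp [hE, hω]
    have h3 := eventually_all_finset (Finset.univ (α := Fin n)) |>.mpr fun i _ => h2 i
    filter_upwards [h3] with ω hω
    exact Finset.sum_congr rfl fun i hi => hω i hi
  filter_upwards [hAco, hBco] with ω h1 h2
  rw [h1, h2]
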